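/- Let h : ℝ → ℝ be differentiable. Define S(φ₁, φ₂) = 2·h((φ₁+φ₂)/2)·sin((φ₂−φ₁)/2) and γ(ψ) = h(ψ)·(cos ψ, sin ψ) + h'(ψ)·(−sin ψ, cos ψ) ∈ ℝ². Then for all φ₁, φ₂ ∈ ℝ, writing ψ = (φ₁+φ₂)/2, the partial derivatives of S satisfy ∂S/∂φ₁(φ₁, φ₂) = −⟨γ(ψ), (cos φ₁, sin φ₁)⟩ and ∂S/∂φ₂(φ₁, φ₂) = ⟨γ(ψ), (cos φ₂, sin φ₂)⟩. -/

import Mathlib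

open Real

/-- The non-standard generating function `S(φ₁,φ₂) = 2 h((φ₁+φ₂)/2) sin((φ₂-φ₁)/2)`
has partial derivatives `-⟨γ(ψ), (cos φ₁, sin φ₁)⟩` and `⟨γ(ψ), (cos φ₂, sin φ₂)⟩`,
where `γ(ψ) = h(ψ)(cos ψ, sin ψ) + h'(ψ)(-sin ψ, cos ψ)` and `ψ = (φ₁+φ₂)/2`. -/
theorem stmt_0 (h : ℝ → ℝ) (hd : Differentiable ℝ h)
    (S : ℝ → ℝ → ℝ)
    (hS : ∀ φ₁ φ₂ : ℝ, S φ₁ φ₂ = 2 * h ((φ₁ + φ₂) / 2) * Real.sin ((φ₂ - φ₁) / 2))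
    (γ : ℝ → EuclideanSpace ℝ (Fin 2))
    (hγ : ∀ ψ : ℝ, γ ψ = h ψ • (WithLp.toLp 2 ![Real.cos ψ, Real.sin ψ] : EuclideanSpace ℝ (Fin 2))
        + deriv h ψ • (WithLp.toLp 2 ![-Real.sin ψ, Real.cos ψ] : EuclideanSpace ℝ (Fin 2)))
    (φ₁ φ₂ : ℝ) :
    deriv (fun x => S x φ₂) φ₁
        = -(inner ℝ (γ ((φ₁ + φ₂) / 2))
            (WithLp.toLp 2 ![Real.cos φ₁, Real.sin φ₁] : EuclideanSpace ℝ (Fin 2)) : ℝ)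
      ∧ deriv (fun y => S φ₁ y) φ₂
        = (inner ℝ (γ ((φ₁ + φ₂) / 2))
            (WithLp.toLp 2 ![Real.cos φ₂, Real.sin φ₂] : EuclideanSpace ℝ (Fin 2)) : ℝ) := by

  have hψ : (φ₁ + φ₂) / 2 = (φ₁ + φ₂) / 2 := rfl
  set ψ : ℝ := (φ₁ + φ₂) / 2 with hψdef
  have hinner : ∀ φ : ℝ,
      (inner ℝ (γ ψ) (WithLp.toLp 2 ![Real.cos φ, Real.sin φ] : EuclideanSpace ℝ (Fin 2)) : ℝ)
      = h ψ * Real.cos (ψ - φ) + deriv h ψ * Real.sin (φ - ψ) := by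
    intro φ
    simp only [hγ, PiLp.inner_apply, Fin.sum_univ_two, PiLp.add_apply, PiLp.smul_apply,
      Matrix.cons_val_zero, Matrix.cons_val_one, Matrix.head_cons, smul_eq_mul,
      Pi.add_apply, Pi.smul_apply, PiLp.toLp_apply,
      RCLike.inner_apply, conj_trivial, Real.cos_sub, Real.sin_sub]
    ring
  have h1 : HasDerivAt (fun x => S x φ₂)
      (deriv h ψ * Real.sin ((φ₂ - φ₁) / 2) - h ψ * Real.cos ((φ₂ - φ₁) / 2)) φ₁ := by
    have he : (fun x => S x φ₂) = fun x => 2 * h ((x + φ₂) / 2) * Real.sin ((φ₂ - x) / 2) :=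
      funext fun x => hS x φ₂
    rw [he]
    have hin : HasDerivAt (fun x : ℝ => (x + φ₂) / 2) (1 / 2) φ₁ := by
      simpa using ((hasDerivAt_id φ₁).add_const φ₂).div_const 2
    have hh : HasDerivAt (fun x => h ((x + φ₂) / 2)) (deriv h ψ * (1 / 2)) φ₁ :=
      ((hd ψ).hasDerivAt).comp φ₁ hin
    have hin2 : HasDerivAt (fun x : ℝ => (φ₂ - x) / 2) (-1 / 2 : ℝ) φ₁ := by
      simpa using ((hasDerivAt_id φ₁).const_sub φ₂).div_const 2
    have hs : HasDerivAt (fun x => Real.sin ((φ₂ - x) / 2))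
        (Real.cos ((φ₂ - φ₁) / 2) * (-1 / 2)) φ₁ :=
      (Real.hasDerivAt_sin _).comp φ₁ hin2
    have := (hh.const_mul 2).mul hs
    refine this.congr_deriv ?_
    ring
  have h2 : HasDerivAt (fun y => S φ₁ y)
      (deriv h ψ * Real.sin ((φ₂ - φ₁) / 2) + h ψ * Real.cos ((φ₂ - φ₁) / 2)) φ₂ := by
    have he : (fun y => S φ₁ y) = fun y => 2 * h ((φ₁ + y) / 2) * Real.sin ((y - φ₁) / 2) :=
      funext fun y => hS φ₁ y
    rw [he]
    have hin : HasDerivAt (fun y : ℝ => (φ₁ + y) / 2) (1 / 2) φ₂ := by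
      simpa using ((hasDerivAt_id φ₂).const_add φ₁).div_const 2
    have hh : HasDerivAt (fun y => h ((φ₁ + y) / 2)) (deriv h ψ * (1 / 2)) φ₂ :=
      ((hd ψ).hasDerivAt).comp φ₂ hin
    have hin2 : HasDerivAt (fun y : ℝ => (y - φ₁) / 2) ((1 : ℝ) / 2) φ₂ := by
      simpa using ((hasDerivAt_id φ₂).sub_const φ₁).div_const 2
    have hs : HasDerivAt (fun y => Real.sin ((y - φ₁) / 2))
        (Real.cos ((φ₂ - φ₁) / 2) * (1 / 2)) φ₂ :=
      (Real.hasDerivAt_sin _).comp φ₂ hin2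
    have := (hh.const_mul 2).mul hs
    refine this.congr_deriv ?_
    ring
  constructor
  · rw [h1.deriv, hinner φ₁]
    have e1 : ψ - φ₁ = (φ₂ - φ₁) / 2 := by rw [hψdef]; ring
    have e2 : φ₁ - ψ = -((φ₂ - φ₁) / 2) := by rw [hψdef]; ring
    rw [e1, e2, Real.sin_neg]
    ring
  · rw [h2.deriv, hinner φ₂]
    have e1 : ψ - φ₂ = -((φ₂ - φ₁) / 2) := by rw [hψdef]; ring
    have e2 : φ₂ - ψ = (φ₂ - φ₁) / 2 := by rw [hψdef]; ring
    rw [e1, e2, Real.cos_neg]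
    ring
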